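/- Let G be a finite group of odd order with G' = [G,G] ≅ Z_p × Z_q for distinct primes p, q, and suppose a ∈ G and γ₁, γ₂ ∈ G' are such that ⟨γ₁⟩ = Z_p, ⟨γ₂⟩ = Z_q (identifying the factors). Then γ₁^a·γ₁ generates Z_p, γ₂^a·γ₂ generates Z_q, and (γ₁^a γ₁)(γ₂^a γ₂) generates G'. -/
import Mathlib

/-- An element of odd order cannot invert a nontrivial element under conjugation. -/
lemma aux_odd {G : Type*} [Group G] [Finite G] (hodd : Odd (Nat.card G))
    (a g : G) (h : a⁻¹ * g * a * g = 1) : g = 1 := by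
  have hinv : a⁻¹ * g * a = g⁻¹ := eq_inv_of_mul_eq_one_left h
  have h2 : a⁻¹ * g⁻¹ * a = g := by
    have := congrArg (·⁻¹) hinv
    simpa [mul_inv_rev, mul_assoc] using this
  have key : ∀ k : ℕ, (a ^ k)⁻¹ * g * a ^ k = (if Even k then g else g⁻¹) := by
    intro k
    induction k with
    | zero => simp
    | succ n ih =>
      have step : (a ^ (n+1))⁻¹ * g * a ^ (n+1) = a⁻¹ * ((a ^ n)⁻¹ * g * a ^ n) * a := by
        rw [pow_succ]; group
      rw [step, ih]
      by_cases hn : Even n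
      · rw [if_pos hn, if_neg (by simp [Nat.even_add_one, hn]), mul_assoc, ← mul_assoc]
        exact hinv
      · rw [if_neg hn, if_pos (by simp [Nat.even_add_one, hn])]
        exact h2
  have hoa : Odd (orderOf a) := hodd.of_dvd_nat (orderOf_dvd_natCard a)
  have hn := key (orderOf a)
  rw [pow_orderOf_eq_one, if_neg (Nat.not_even_iff_odd.mpr hoa)] at hn
  simp only [inv_one, one_mul, mul_one] at hn
  have hgg : g * g = 1 := mul_eq_one_iff_eq_inv.mpr hn
  have hd : orderOf g ∣ 2 := orderOf_dvd_of_pow_eq_one (by simpa [pow_two] using hgg)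
  have ho : Odd (orderOf g) := hodd.of_dvd_nat (orderOf_dvd_natCard g)
  rcases (Nat.dvd_prime Nat.prime_two).mp hd with h1 | h1
  · exact orderOf_eq_one_iff.mp h1
  · rw [h1] at ho; exact absurd ho (by decide)

/-- A nontrivial element of a subgroup of prime order generates it. -/
lemma aux_gen {G : Type*} [Group G] [Finite G] {p : ℕ} (hp : p.Prime)
    {Z : Subgroup G} (hZ : Nat.card Z = p) {x : G} (hx : x ∈ Z) (hx1 : x ≠ 1) :
    Subgroup.zpowers x = Z := by
  apply Subgroup.eq_of_le_of_card_ge ((Subgroup.zpowers_le).mpr hx)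
  rw [hZ, Nat.card_zpowers]
  have hd : orderOf x ∣ p := hZ ▸ Subgroup.orderOf_dvd_natCard Z hx
  rcases (Nat.Prime.eq_one_or_self_of_dvd hp _ hd) with h | h
  · exact absurd (orderOf_eq_one_iff.mp h) hx1
  · exact h.ge

theorem stmt_15 {G : Type*} [Group G] [Finite G]
    (hodd : Odd (Nat.card G)) (p q : ℕ)
    (hp : p.Prime) (hq : q.Prime) (hpq : p ≠ q)
    (Zp Zq : Subgroup G) (hZpN : Zp.Normal) (hZqN : Zq.Normal)
    (hZp : Nat.card Zp = p) (hZq : Nat.card Zq = q)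
    (hG' : commutator G = Zp ⊔ Zq)
    (a γ₁ γ₂ : G)
    (hγ₁ : Subgroup.zpowers γ₁ = Zp) (hγ₂ : Subgroup.zpowers γ₂ = Zq) :
    Subgroup.zpowers (a⁻¹ * γ₁ * a * γ₁) = Zp ∧
    Subgroup.zpowers (a⁻¹ * γ₂ * a * γ₂) = Zq ∧
    Subgroup.zpowers ((a⁻¹ * γ₁ * a * γ₁) * (a⁻¹ * γ₂ * a * γ₂)) = commutator G := by
  set x := a⁻¹ * γ₁ * a * γ₁ with hxdef
  set y := a⁻¹ * γ₂ * a * γ₂ with hydef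
  have hγ₁Zp : γ₁ ∈ Zp := hγ₁ ▸ Subgroup.mem_zpowers γ₁
  have hγ₂Zq : γ₂ ∈ Zq := hγ₂ ▸ Subgroup.mem_zpowers γ₂
  have hxZ : x ∈ Zp := by
    have : a⁻¹ * γ₁ * a ∈ Zp := by simpa using hZpN.conj_mem γ₁ hγ₁Zp a⁻¹
    exact mul_mem this hγ₁Zp
  have hyZ : y ∈ Zq := by
    have : a⁻¹ * γ₂ * a ∈ Zq := by simpa using hZqN.conj_mem γ₂ hγ₂Zq a⁻¹
    exact mul_mem this hγ₂Zq
  have hγ₁1 : γ₁ ≠ 1 := by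
    intro h
    rw [h, Subgroup.zpowers_one_eq_bot] at hγ₁
    rw [← hγ₁, Subgroup.card_bot] at hZp
    exact hp.one_lt.ne hZp
  have hγ₂1 : γ₂ ≠ 1 := by
    intro h
    rw [h, Subgroup.zpowers_one_eq_bot] at hγ₂
    rw [← hγ₂, Subgroup.card_bot] at hZq
    exact hq.one_lt.ne hZq
  have hx1 : x ≠ 1 := fun h => hγ₁1 (aux_odd hodd a γ₁ h)
  have hy1 : y ≠ 1 := fun h => hγ₂1 (aux_odd hodd a γ₂ h)
  have h1 : Subgroup.zpowers x = Zp := aux_gen hp hZp hxZ hx1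
  have h2 : Subgroup.zpowers y = Zq := aux_gen hq hZq hyZ hy1
  refine ⟨h1, h2, ?_⟩
  have hcp : Nat.gcd p q = 1 := (Nat.coprime_primes hp hq).mpr hpq
  have hdis : Disjoint Zp Zq := by
    rw [Subgroup.disjoint_def]
    intro g hgp hgq
    have d1 : orderOf g ∣ p := hZp ▸ Subgroup.orderOf_dvd_natCard Zp hgp
    have d2 : orderOf g ∣ q := hZq ▸ Subgroup.orderOf_dvd_natCard Zq hgq
    have := Nat.dvd_gcd d1 d2
    rw [hcp] at this
    exact orderOf_eq_one_iff.mp (Nat.eq_one_of_dvd_one this)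
  have hcomm : Commute x y :=
    Subgroup.commute_of_normal_of_disjoint Zp Zq hZpN hZqN hdis x y hxZ hyZ
  have hox : orderOf x = p := by rw [← Nat.card_zpowers, h1, hZp]
  have hoy : orderOf y = q := by rw [← Nat.card_zpowers, h2, hZq]
  rw [hG']
  apply le_antisymm
  · rw [Subgroup.zpowers_le]
    exact mul_mem (Subgroup.mem_sup_left hxZ) (Subgroup.mem_sup_right hyZ)
  · have hxyq : (x * y) ^ q = x ^ q := by
      rw [hcomm.mul_pow, ← hoy, pow_orderOf_eq_one, mul_one]
    have hxyp : (x * y) ^ p = y ^ p := by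
      rw [hcomm.mul_pow, ← hox, pow_orderOf_eq_one, one_mul]
    have hxq1 : x ^ q ≠ 1 := by
      intro h
      have : p ∣ q := hox ▸ orderOf_dvd_of_pow_eq_one h
      exact hpq ((Nat.prime_dvd_prime_iff_eq hp hq).mp this)
    have hyp1 : y ^ p ≠ 1 := by
      intro h
      have : q ∣ p := hoy ▸ orderOf_dvd_of_pow_eq_one h
      exact hpq ((Nat.prime_dvd_prime_iff_eq hq hp).mp this).symm
    have hZple : Zp ≤ Subgroup.zpowers (x * y) := by
      rw [← aux_gen hp hZp (pow_mem hxZ q) hxq1, ← hxyq, Subgroup.zpowers_le]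
      exact pow_mem (Subgroup.mem_zpowers _) q
    have hZqle : Zq ≤ Subgroup.zpowers (x * y) := by
      rw [← aux_gen hq hZq (pow_mem hyZ p) hyp1, ← hxyp, Subgroup.zpowers_le]
      exact pow_mem (Subgroup.mem_zpowers _) p
    exact sup_le hZple hZqle
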